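/- Let p and q be two probability measures on a finite sample space Ω, and suppose that for some δ ∈ (0, 1/2], every event E ⊆ Ω satisfies 1 − δ < q(E)/p(E) < 1 + δ (in particular p(x) > 0 for all x). Then the KL-divergence satisfies KL(p; q) < δ². -/

import Mathlib

/-- Quadratic lower bound on the logarithm: for `t ≥ -1/2`, `t - t² ≤ log (1 + t)`. -/
lemma log_quad_bound (t : ℝ) (ht : -(1/2 : ℝ) ≤ t) : t - t^2 ≤ Real.log (1 + t) := by
  set f : ℝ → ℝ := fun x => Real.log (1 + x) - (x - x ^ 2) with hf
  have hd : ∀ x : ℝ, -1 < x → HasDerivAt f (1 / (1 + x) - (1 - 2 * x)) x := by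
    intro x hx
    have h1 : HasDerivAt (fun y : ℝ => 1 + y) 1 x := by
      simpa using (hasDerivAt_id x).const_add 1
    have h2 : HasDerivAt (fun y : ℝ => Real.log (1 + y)) ((1 + x)⁻¹ * 1) x :=
      (Real.hasDerivAt_log (by linarith)).comp x h1
    have h3 : HasDerivAt (fun y : ℝ => y - y ^ 2) (1 - 2 * x) x := by
      have h := (hasDerivAt_id x).sub ((hasDerivAt_pow 2 x))
      simp at h
      exact h
    have := h2.sub h3
    rw [one_div]
    simp at this
    exact this
  have hf0 : f 0 = 0 := by simp [hf]
  have key : 0 ≤ f t := by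
    rcases le_or_gt t 0 with h | h
    · have hanti : AntitoneOn f (Set.Icc (-(1/2 : ℝ)) 0) := by
        apply antitoneOn_of_deriv_nonpos (convex_Icc _ _)
        · intro x hx
          simp only [Set.mem_Icc] at hx
          exact (hd x (by linarith [hx.1])).continuousAt.continuousWithinAt
        · intro x hx
          rw [interior_Icc] at hx
          exact (hd x (by linarith [hx.1])).differentiableAt.differentiableWithinAt
        · intro x hx
          rw [interior_Icc] at hx
          rw [(hd x (by linarith [hx.1])).deriv]
          rw [sub_nonpos, div_le_iff₀ (by linarith [hx.1])]
          nlinarith [hx.1, hx.2]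
      have := hanti ⟨ht, h⟩ ⟨by norm_num, le_refl 0⟩ h
      linarith [hf0 ▸ this]
    · have hmono : MonotoneOn f (Set.Ici (0 : ℝ)) := by
        apply monotoneOn_of_deriv_nonneg (convex_Ici _)
        · intro x hx
          exact (hd x (by simp at hx; linarith)).continuousAt.continuousWithinAt
        · intro x hx
          rw [interior_Ici] at hx
          exact (hd x (by simp at hx; linarith)).differentiableAt.differentiableWithinAt
        · intro x hx
          rw [interior_Ici] at hx
          simp only [Set.mem_Ioi] at hx
          rw [(hd x (by linarith)).deriv]
          rw [sub_nonneg, le_div_iff₀ (by linarith)]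
          nlinarith
      have := hmono (Set.self_mem_Ici) (Set.mem_Ici.mpr h.le) h.le
      linarith [hf0 ▸ this]
  simp only [hf] at key
  linarith

/-- Reverse Pinsker-type inequality: if all events have probability ratio within
`(1 − δ, 1 + δ)`, then `KL(p; q) < δ²`. -/
theorem kl_from_ratio_bound {Ω : Type*} [Fintype Ω] (p q : Ω → ℝ) (δ : ℝ)
    (hδ0 : 0 < δ) (hδ : δ ≤ 1 / 2)
    (hp : ∀ x, 0 < p x) (hq : ∀ x, 0 ≤ q x)
    (hp1 : ∑ x, p x = 1) (hq1 : ∑ x, q x = 1)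
    (hratio : ∀ E : Finset Ω, E.Nonempty →
      1 - δ < (∑ x ∈ E, q x) / (∑ x ∈ E, p x) ∧
      (∑ x ∈ E, q x) / (∑ x ∈ E, p x) < 1 + δ) :
    ∑ x, p x * Real.log (p x / q x) < δ ^ 2 := by
  have hne : (Finset.univ : Finset Ω).Nonempty := by
    by_contra h
    rw [Finset.not_nonempty_iff_eq_empty] at h
    rw [h] at hp1
    simp at hp1
  have hrat : ∀ x : Ω, 1 - δ < q x / p x ∧ q x / p x < 1 + δ := by
    intro x
    have := hratio {x} (Finset.singleton_nonempty x)
    simpa using this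
  have key : ∀ x : Ω, p x * Real.log (p x / q x) < δ ^ 2 * p x - (q x - p x) := by
    intro x
    have hpx := hp x
    obtain ⟨t, hT⟩ : ∃ t : ℝ, t = q x / p x - 1 := ⟨_, rfl⟩
    have ht1 : -δ < t := by rw [hT]; have := (hrat x).1; linarith
    have ht2 : t < δ := by rw [hT]; have := (hrat x).2; linarith
    have ht : -(1/2 : ℝ) ≤ t := by linarith
    have hqx : 0 < q x := by
      have h1 : (1 - δ) * p x < q x := by
        have := (hrat x).1
        calc (1 - δ) * p x < (q x / p x) * p x := by nlinarith
        _ = q x := by field_simp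
      nlinarith
    have hlog : t - t^2 ≤ Real.log (1 + t) := log_quad_bound t ht
    have h1t : 1 + t = q x / p x := by rw [hT]; ring
    have hlogflip : Real.log (p x / q x) = - Real.log (q x / p x) := by
      rw [← Real.log_inv]
      congr 1
      field_simp
    have hb : p x * Real.log (p x / q x) ≤ p x * (t^2 - t) := by
      rw [hlogflip, ← h1t]
      nlinarith [hlog, hpx.le]
    have hts : t^2 < δ^2 := by nlinarith
    have hpt : p x * t = q x - p x := by rw [hT]; field_simp
    nlinarith [hb, hts, hpt, hpx]
  calc ∑ x, p x * Real.log (p x / q x)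
      < ∑ x, (δ ^ 2 * p x - (q x - p x)) :=
        Finset.sum_lt_sum_of_nonempty hne (fun x _ => key x)
    _ = δ ^ 2 := by
        rw [Finset.sum_sub_distrib, Finset.sum_sub_distrib, ← Finset.mul_sum, hp1, hq1]
        ring
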